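/- arXiv:1104.1352 — 2 statements merged into one kernel-verified Lean document; each statement's English description precedes it below -/
import Mathlib

section
/- If |δ_i| ≤ u for i = 1,…,n, each ρ_i ∈ {-1,1}, and n·u < 1, then ∏_{i=1}^n (1+δ_i)^{ρ_i} = 1 + θ for some θ with |θ| ≤ n·u/(1 − n·u). -/
theorem prod_one_add_delta_pow (n : ℕ) (u : ℝ) (δ : Fin n → ℝ) (ρ : Fin n → ℤ)
    (hu0 : 0 < u) (hu1 : u < 1)
    (hδ : ∀ i, |δ i| ≤ u) (hρ : ∀ i, ρ i = 1 ∨ ρ i = -1)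
    (hnu : (n : ℝ) * u < 1) :
    ∃ θ : ℝ, (∏ i, (1 + δ i) ^ (ρ i)) = 1 + θ ∧ |θ| ≤ (n : ℝ) * u / (1 - (n : ℝ) * u) := by
  have h1u : (0:ℝ) < 1 - u := by linarith
  have hnu0 : (0:ℝ) < 1 - (n:ℝ) * u := by linarith
  have hnn : (0:ℝ) ≤ (n:ℝ) * u := by positivity
  have hfac : ∀ i : Fin n, 0 < 1 + δ i := by
    intro i
    have := abs_le.mp (hδ i)
    linarith [this.1]
  have hlow : ∀ i : Fin n, 1 - u ≤ (1 + δ i) ^ (ρ i) := by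
    intro i
    have hd := abs_le.mp (hδ i)
    rcases hρ i with h | h
    · rw [h, zpow_one]; linarith [hd.1]
    · rw [h, zpow_neg_one]
      rw [← one_div, le_div_iff₀ (hfac i)]
      nlinarith [hd.2]
  have hup : ∀ i : Fin n, (1 + δ i) ^ (ρ i) ≤ (1 - u)⁻¹ := by
    intro i
    have hd := abs_le.mp (hδ i)
    rcases hρ i with h | h
    · rw [h, zpow_one]
      rw [← one_div, le_div_iff₀ h1u]
      nlinarith [hd.2]
    · rw [h, zpow_neg_one]
      exact inv_anti₀ (by linarith) (by linarith [hd.1])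
  have hprod_low : (1 - u) ^ n ≤ ∏ i, (1 + δ i) ^ (ρ i) := by
    calc (1 - u) ^ n = ∏ _i : Fin n, (1 - u) := by
          rw [Finset.prod_const, Finset.card_univ, Fintype.card_fin]
      _ ≤ ∏ i, (1 + δ i) ^ (ρ i) :=
          Finset.prod_le_prod (fun i _ => le_of_lt h1u) (fun i _ => hlow i)
  have hprod_up : (∏ i, (1 + δ i) ^ (ρ i)) ≤ ((1 - u)⁻¹) ^ n := by
    calc (∏ i, (1 + δ i) ^ (ρ i)) ≤ ∏ _i : Fin n, (1 - u)⁻¹ :=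
          Finset.prod_le_prod (fun i _ => le_of_lt (zpow_pos (hfac i) _)) (fun i _ => hup i)
      _ = ((1 - u)⁻¹) ^ n := by
          rw [Finset.prod_const, Finset.card_univ, Fintype.card_fin]
  -- Bernoulli
  have hbern : 1 - (n:ℝ) * u ≤ (1 - u) ^ n := by
    have := one_add_mul_le_pow (a := -u) (by linarith) n
    calc 1 - (n:ℝ) * u = 1 + (n:ℝ) * (-u) := by ring
      _ ≤ (1 + -u) ^ n := this
      _ = (1 - u) ^ n := by ring_nf
  refine ⟨(∏ i, (1 + δ i) ^ (ρ i)) - 1, by ring, ?_⟩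
  rw [abs_le]
  constructor
  · have h1 : -((n:ℝ) * u) ≤ -((n:ℝ) * u / (1 - (n:ℝ) * u)) → True := fun _ => trivial
    have key : (n:ℝ) * u ≤ (n:ℝ) * u / (1 - (n:ℝ) * u) := by
      rw [le_div_iff₀ hnu0]; nlinarith
    have : 1 - (n:ℝ) * u ≤ ∏ i, (1 + δ i) ^ (ρ i) := le_trans hbern hprod_low
    linarith
  · have hpow_pos : (0:ℝ) < (1 - u) ^ n := pow_pos h1u n
    have hinv : ((1 - u)⁻¹) ^ n ≤ (1 - (n:ℝ) * u)⁻¹ := by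
      rw [inv_pow]
      exact inv_anti₀ hnu0 hbern
    have : (1 - (n:ℝ) * u)⁻¹ - 1 = (n:ℝ) * u / (1 - (n:ℝ) * u) := by
      field_simp
      ring
    linarith [le_trans hprod_up hinv]
end

section
/- Let x be in the interior of the Lorentz cone L_p and g(x) = ∇f(x) where f(x) = −ln(x₀² − ‖x̄‖²). Then −g(x) is in the interior of L_p and −g(−g(x)) = x. -/
/-- The logarithmic barrier of the Lorentz cone `L_p ⊂ ℝ^{p+1}`. -/
noncomputable def lorentzBarrier (p : ℕ) (x : EuclideanSpace ℝ (Fin (p + 1))) : ℝ :=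
  -Real.log ((x 0) ^ 2 - ∑ i : Fin p, (x i.succ) ^ 2)

noncomputable def gVec (p : ℕ) (x : EuclideanSpace ℝ (Fin (p + 1))) :
    EuclideanSpace ℝ (Fin (p + 1)) :=
  WithLp.toLp 2 fun i => Fin.cases (motive := fun _ => ℝ) (-2 * x 0 / ((x 0) ^ 2 - ∑ i : Fin p, (x i.succ) ^ 2))
    (fun j => 2 * x j.succ / ((x 0) ^ 2 - ∑ i : Fin p, (x i.succ) ^ 2)) i

lemma hasGradient_lorentzBarrier (p : ℕ) (x : EuclideanSpace ℝ (Fin (p + 1)))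
    (hD : (x 0) ^ 2 - ∑ i : Fin p, (x i.succ) ^ 2 ≠ 0) :
    HasGradientAt (lorentzBarrier p) (gVec p x) x := by
  set D : ℝ := (x 0) ^ 2 - ∑ i : Fin p, (x i.succ) ^ 2 with hDdef
  have hq : HasFDerivAt (fun y : EuclideanSpace ℝ (Fin (p + 1)) =>
      (y 0) ^ 2 - ∑ i : Fin p, (y i.succ) ^ 2)
      (((2 * x 0) • (EuclideanSpace.proj (0 : Fin (p + 1)) : EuclideanSpace ℝ (Fin (p+1)) →L[ℝ] ℝ)) -
        (∑ i : Fin p, (2 * x i.succ) • (EuclideanSpace.proj (i.succ : Fin (p + 1)) : EuclideanSpace ℝ (Fin (p+1)) →L[ℝ] ℝ))) x := by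
    have h0 : HasFDerivAt (fun y : EuclideanSpace ℝ (Fin (p + 1)) => (y 0) ^ 2)
        ((2 * x 0) • (EuclideanSpace.proj (0 : Fin (p + 1)) : EuclideanSpace ℝ (Fin (p+1)) →L[ℝ] ℝ)) x := by
      have := (hasDerivAt_pow 2 (x 0)).comp_hasFDerivAt x
        ((EuclideanSpace.proj (0 : Fin (p + 1)) : EuclideanSpace ℝ (Fin (p+1)) →L[ℝ] ℝ).hasFDerivAt (x := x))
      simpa [Function.comp_def] using this
    have hsum : HasFDerivAt (fun y : EuclideanSpace ℝ (Fin (p + 1)) => ∑ i : Fin p, (y i.succ) ^ 2)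
        (∑ i : Fin p, (2 * x i.succ) • (EuclideanSpace.proj (i.succ : Fin (p + 1)) : EuclideanSpace ℝ (Fin (p+1)) →L[ℝ] ℝ)) x := by
      apply HasFDerivAt.fun_sum
      intro i _
      have := (hasDerivAt_pow 2 (x i.succ)).comp_hasFDerivAt x
        ((EuclideanSpace.proj (i.succ : Fin (p + 1)) : EuclideanSpace ℝ (Fin (p+1)) →L[ℝ] ℝ).hasFDerivAt (x := x))
      simpa [Function.comp_def] using this
    exact h0.sub hsum
  have hlog := (hq.log hD).neg
  rw [hasGradientAt_iff_hasFDerivAt]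
  convert hlog using 1
  · rfl
  · rfl
  · rfl
  apply ContinuousLinearMap.ext
  intro h
  simp only [InnerProductSpace.toDual_apply_apply, PiLp.inner_apply, RCLike.inner_apply,
    ContinuousLinearMap.neg_apply, ContinuousLinearMap.smul_apply,
    ContinuousLinearMap.sub_apply, ContinuousLinearMap.sum_apply,
    PiLp.proj_apply, smul_eq_mul, starRingEnd_apply, star_trivial]
  rw [Fin.sum_univ_succ]
  simp only [gVec, Fin.cases_zero, Fin.cases_succ, ← hDdef]
  rw [mul_sub, Finset.mul_sum, neg_sub]
  have hs : ∑ j : Fin p, h j.succ * (2 * x j.succ / D)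
      = ∑ j : Fin p, D⁻¹ * (2 * x j.succ * h j.succ) :=
    Finset.sum_congr rfl (fun j _ => by ring)
  rw [hs]
  ring

/-- `−g(x)` lies in the interior of the Lorentz cone and `−g(−g(x)) = x`. -/
theorem neg_gradient_lorentzBarrier (p : ℕ) (x : EuclideanSpace ℝ (Fin (p + 1)))
    (hx : Real.sqrt (∑ i : Fin p, (x i.succ) ^ 2) < x 0) :
    (Real.sqrt (∑ i : Fin p, ((-gradient (lorentzBarrier p) x) i.succ) ^ 2) <
        (-gradient (lorentzBarrier p) x) 0) ∧
    -gradient (lorentzBarrier p) (-gradient (lorentzBarrier p) x) = x := by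
  set S : ℝ := ∑ i : Fin p, (x i.succ) ^ 2 with hSdef
  have hS : 0 ≤ S := Finset.sum_nonneg fun i _ => sq_nonneg _
  have hx0 : 0 < x 0 := lt_of_le_of_lt (Real.sqrt_nonneg S) hx
  have hSlt : S < (x 0) ^ 2 := by
    have := mul_self_lt_mul_self (Real.sqrt_nonneg S) hx
    rw [Real.mul_self_sqrt hS] at this
    nlinarith
  set D : ℝ := (x 0) ^ 2 - S with hDdef
  have hD : 0 < D := by simp [hDdef]; linarith
  have hg : gradient (lorentzBarrier p) x = gVec p x :=
    (hasGradient_lorentzBarrier p x hD.ne').gradient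
  have hy0 : (-gVec p x) 0 = 2 * x 0 / D := by
    show -(gVec p x 0) = _
    simp only [gVec, PiLp.toLp_apply, Fin.cases_zero, ← hSdef, ← hDdef]
    ring
  have hys : ∀ j : Fin p, (-gVec p x) j.succ = -(2 * x j.succ) / D := by
    intro j
    show -(gVec p x j.succ) = _
    simp only [gVec, PiLp.toLp_apply, Fin.cases_succ, ← hSdef, ← hDdef]
    ring
  have h1 : ∑ j : Fin p, ((-gVec p x) j.succ) ^ 2 = (2 / D) ^ 2 * S := by
    rw [hSdef, Finset.mul_sum]
    refine Finset.sum_congr rfl fun j _ => ?_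
    rw [hys j]; ring
  have hDpos2 : (0:ℝ) < 2 / D := by positivity
  have hsqrt : Real.sqrt (∑ j : Fin p, ((-gVec p x) j.succ) ^ 2) = (2 / D) * Real.sqrt S := by
    rw [h1, Real.sqrt_mul (sq_nonneg _), Real.sqrt_sq hDpos2.le]
  have part1 : Real.sqrt (∑ j : Fin p, ((-gVec p x) j.succ) ^ 2) < (-gVec p x) 0 := by
    rw [hsqrt, hy0]
    calc (2 / D) * Real.sqrt S < (2 / D) * x 0 := by
          exact mul_lt_mul_of_pos_left hx hDpos2
      _ = 2 * x 0 / D := by ring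
  have hDy : ((-gVec p x) 0) ^ 2 - ∑ j : Fin p, ((-gVec p x) j.succ) ^ 2 = 4 / D := by
    rw [hy0, h1, hDdef]
    field_simp
    ring
  have hDy' : ((-gVec p x) 0) ^ 2 - ∑ j : Fin p, ((-gVec p x) j.succ) ^ 2 ≠ 0 := by
    rw [hDy]; positivity
  have hg2 : gradient (lorentzBarrier p) (-gVec p x) = gVec p (-gVec p x) :=
    (hasGradient_lorentzBarrier p (-gVec p x) hDy').gradient
  refine ⟨by rw [hg]; exact part1, ?_⟩
  rw [hg, hg2]
  ext i
  show -(gVec p (-gVec p x) i) = x i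
  refine Fin.cases ?_ ?_ i
  · rw [gVec]; simp only [PiLp.toLp_apply, Fin.cases_zero]
    rw [hDy, hy0]
    field_simp
    ring
  · intro j
    rw [gVec]; simp only [PiLp.toLp_apply, Fin.cases_succ]
    rw [hDy, hys j]
    field_simp
    ring
end
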